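/- Let m ≥ 2 be an integer. The residue at z = 1 of (log z)²/(z·(1-z)^m) equals -∑_{s=2}^{m-1} (2/s)∑_{p=1}^{s-1} 1/p (interpreted as 0 when m = 2). -/

import Mathlib

open Complex Finset

private noncomputable def Hsum (n : ℕ) : ℂ := ∑ p ∈ Finset.Icc 1 n, (1 / (p : ℂ))

private noncomputable def Csum (n : ℕ) : ℂ :=
  ∑ s ∈ Finset.Icc 2 n, ((2 / (s : ℂ)) * Hsum (s - 1))

private lemma Hsum_succ (n : ℕ) : Hsum (n + 1) = Hsum n + 1 / ((n : ℂ) + 1) := by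
  unfold Hsum
  rw [Finset.sum_Icc_succ_top (by omega : 1 ≤ n + 1)]
  push_cast
  ring

private lemma Csum_succ (n : ℕ) : Csum (n + 1) = Csum n + (2 / ((n : ℂ) + 1)) * Hsum n := by
  unfold Csum
  rcases Nat.eq_zero_or_pos n with rfl | hn
  · simp [Hsum]
  · rw [Finset.sum_Icc_succ_top (by omega : 2 ≤ n + 1)]
    push_cast
    simp

private lemma key (c : ℂ) (n : ℕ) : ∀ z ∈ Complex.slitPlane,
    iteratedDeriv n (fun z : ℂ => c * (Complex.log z) ^ 2 / z) z =
      c * (-1) ^ n * n.factorial *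
        (((Complex.log z) ^ 2 - 2 * Hsum n * Complex.log z + Csum n) / z ^ (n + 1)) := by
  induction n with
  | zero =>
    intro z hz
    simp [Hsum, Csum, mul_div_assoc]
  | succ n ih =>
    intro z hz
    have hz0 : z ≠ 0 := Complex.slitPlane_ne_zero hz
    have hev : iteratedDeriv n (fun z : ℂ => c * (Complex.log z) ^ 2 / z) =ᶠ[nhds z]
        (fun w => c * (-1) ^ n * n.factorial *
          (((Complex.log w) ^ 2 - 2 * Hsum n * Complex.log w + Csum n) / w ^ (n + 1))) :=
      Filter.eventuallyEq_of_mem (Complex.isOpen_slitPlane.mem_nhds hz)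
        (fun w hw => ih w hw)
    rw [iteratedDeriv_succ, hev.deriv_eq]
    have hlog : HasDerivAt Complex.log z⁻¹ z := Complex.hasDerivAt_log hz
    have h1 : HasDerivAt (fun w : ℂ => (Complex.log w) ^ 2)
        ((2 : ℕ) * (Complex.log z) ^ 1 * z⁻¹) z := hlog.pow 2
    have h2 : HasDerivAt
        (fun w : ℂ => (Complex.log w) ^ 2 - 2 * Hsum n * Complex.log w + Csum n)
        ((2 : ℕ) * (Complex.log z) ^ 1 * z⁻¹ - 2 * Hsum n * z⁻¹) z :=
      (h1.sub (hlog.const_mul (2 * Hsum n))).add_const _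
    have h3 : HasDerivAt (fun w : ℂ => w ^ (n + 1)) (((n : ℂ) + 1) * z ^ n) z := by
      simpa using hasDerivAt_pow (n + 1) z
    have h4 := (h2.div h3 (pow_ne_zero _ hz0)).const_mul (c * (-1) ^ n * (n.factorial : ℂ))
    rw [HasDerivAt.deriv (f := fun w => c * (-1) ^ n * (n.factorial : ℂ) *
      (((Complex.log w) ^ 2 - 2 * Hsum n * Complex.log w + Csum n) / w ^ (n + 1))) h4]
    have hz1 : ((n : ℂ) + 1) ≠ 0 := by
      exact_mod_cast (Nat.cast_ne_zero (R := ℂ)).mpr (Nat.succ_ne_zero n)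
    rw [Hsum_succ, Csum_succ, Nat.factorial_succ]
    push_cast
    field_simp
    ring

/-- The residue at z = 1 of (log z)²/(z(1-z)^m), computed as the (m-1)-st Taylor
coefficient of (z-1)^m · (log z)²/(z(1-z)^m) = (-1)^m (log z)²/z, equals
-∑_{s=2}^{m-1} (2/s)∑_{p=1}^{s-1} 1/p. -/
theorem residue_log_sq_over_one_sub_pow (m : ℕ) (hm : 2 ≤ m) :
    (1 / (m - 1).factorial : ℂ) *
      iteratedDeriv (m - 1) (fun z : ℂ => (-1) ^ m * (Complex.log z) ^ 2 / z) 1 =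
      -∑ s ∈ Finset.Icc 2 (m - 1),
        ((2 / (s : ℂ)) * ∑ p ∈ Finset.Icc 1 (s - 1), (1 / (p : ℂ))) := by
  have h := key ((-1) ^ m) (m - 1) 1 Complex.one_mem_slitPlane
  rw [h, Complex.log_one]
  have hfac : ((m - 1).factorial : ℂ) ≠ 0 := by
    exact_mod_cast Nat.factorial_ne_zero (m - 1)
  have hsign : ((-1 : ℂ)) ^ m * (-1) ^ (m - 1) = -1 := by
    have : m = (m - 1) + 1 := by omega
    rw [this, pow_succ]
    have h2 : ((-1 : ℂ)) ^ (m - 1) * ((-1) ^ (m - 1)) = 1 := by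
      rw [← pow_add, ← two_mul, pow_mul]
      norm_num
    calc ((-1 : ℂ)) ^ (m - 1) * (-1) * (-1) ^ (m - 1)
        = ((-1 : ℂ)) ^ (m - 1) * ((-1) ^ (m - 1)) * (-1) := by ring
      _ = -1 := by rw [h2]; ring
  have hC : Csum (m - 1) = ∑ s ∈ Finset.Icc 2 (m - 1),
      ((2 / (s : ℂ)) * ∑ p ∈ Finset.Icc 1 (s - 1), (1 / (p : ℂ))) := rfl
  rw [← hC]
  field_simp
  rw [hsign]
  ring
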